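/- If F is continuously differentiable on a closed interval I ⊂ (0,∞) and q ≥ 1, then the q-variation of F on I satisfies ‖F‖_{v_q(I)} ≤ C_q ‖F‖_{L^q(I)}^{1/q'} ‖F'‖_{L^q(I)}^{1/q}, where 1/q + 1/q' = 1. -/

import Mathlib

open scoped ENNReal NNReal BigOperators
open MeasureTheory

/-- The `q`-variation seminorm of `F` over a set `s ⊆ ℝ`: sup over finite increasing
sequences of points of `s` of `(∑ |F(t_{i+1}) - F(t_i)|^q)^{1/q}`. -/
noncomputable def qVariationOn (q : ℝ) (F : ℝ → ℂ) (s : Set ℝ) : ℝ≥0∞ :=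
  ⨆ (L : ℕ) (t : Fin (L + 1) → ℝ) (_ : StrictMono t) (_ : ∀ i, t i ∈ s),
    (∑ i : Fin L, (‖F (t i.succ) - F (t i.castSucc)‖₊ : ℝ≥0∞) ^ q) ^ (1 / q)

section helperLemmas

open Set

variable {q c d : ℝ} {F F' : ℝ → ℂ}


lemma ftc_bound {c d : ℝ} {F F' : ℝ → ℂ}
    (hder : ∀ t ∈ Icc c d, HasDerivWithinAt F (F' t) (Icc c d) t)
    (hcont : ContinuousOn F' (Icc c d)) {p r : ℝ} (hpr : p ≤ r) (hsub : Icc p r ⊆ Icc c d) :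
    (‖F r - F p‖₊ : ℝ≥0∞) ≤ ∫⁻ x in Ioc p r, ‖F' x‖₊ := by
  have hp : p ∈ Icc c d := hsub ⟨le_refl p, hpr⟩
  have hr : r ∈ Icc c d := hsub ⟨hpr, le_refl r⟩
  have hFc : ContinuousOn F (Icc c d) := fun x hx => (hder x hx).continuousWithinAt
  have hderiv : ∀ x ∈ Ioo p r, HasDerivWithinAt F (F' x) (Ioi x) x := by
    intro x hx
    have hx' : x ∈ Ioo c d := ⟨lt_of_le_of_lt hp.1 hx.1, lt_of_lt_of_le hx.2 hr.2⟩
    have hmem : Icc c d ∈ nhds x := Icc_mem_nhds hx'.1 hx'.2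
    exact ((hder x (Ioo_subset_Icc_self hx')).hasDerivAt hmem).hasDerivWithinAt
  have hint : IntervalIntegrable F' volume p r :=
    (hcont.mono hsub).intervalIntegrable_of_Icc hpr
  have hftc : ∫ y in p..r, F' y = F r - F p :=
    intervalIntegral.integral_eq_sub_of_hasDeriv_right_of_le hpr (hFc.mono hsub) hderiv hint
  rw [← hftc, intervalIntegral.integral_of_le hpr]
  exact enorm_integral_le_lintegral_enorm _

lemma holder_seg {q : ℝ} (hq : 1 ≤ q) {g : ℝ → ℂ} {p r : ℝ} (hpr : p ≤ r)
    (hg : ContinuousOn g (Icc p r)) :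
    (∫⁻ x in Ioc p r, (‖g x‖₊ : ℝ≥0∞)) ^ q ≤
      ENNReal.ofReal (r - p) ^ (q - 1) * ∫⁻ x in Ioc p r, (‖g x‖₊ : ℝ≥0∞) ^ q := by
  have hq0 : (0:ℝ) < q := lt_of_lt_of_le one_pos hq
  have hm : AEStronglyMeasurable g (volume.restrict (Ioc p r)) :=
    (hg.mono Ioc_subset_Icc_self).aestronglyMeasurable measurableSet_Ioc
  have h1 : eLpNorm g 1 (volume.restrict (Ioc p r)) ≤
      eLpNorm g (ENNReal.ofReal q) (volume.restrict (Ioc p r)) *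
        (ENNReal.ofReal (r - p)) ^ (1 - 1/q) := by
    have hle : (1 : ℝ≥0∞) ≤ ENNReal.ofReal q := by
      rw [← ENNReal.ofReal_one]; exact ENNReal.ofReal_le_ofReal hq
    have := eLpNorm_le_eLpNorm_mul_rpow_measure_univ (p := 1) (q := ENNReal.ofReal q) hle hm
    simpa [Measure.restrict_apply_univ, Real.volume_Ioc, ENNReal.toReal_ofReal hq0.le] using this
  have h2 : eLpNorm g 1 (volume.restrict (Ioc p r)) = ∫⁻ x in Ioc p r, ‖g x‖₊ :=
    eLpNorm_one_eq_lintegral_enorm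
  have h3 : eLpNorm g (ENNReal.ofReal q) (volume.restrict (Ioc p r)) =
      (∫⁻ x in Ioc p r, (‖g x‖₊ : ℝ≥0∞) ^ q) ^ (1/q) := by
    rw [eLpNorm_eq_lintegral_rpow_enorm_toReal ((ENNReal.ofReal_pos.2 hq0).ne') ENNReal.ofReal_ne_top,
      ENNReal.toReal_ofReal hq0.le]
    rfl
  calc (∫⁻ x in Ioc p r, (‖g x‖₊ : ℝ≥0∞)) ^ q
      ≤ ((∫⁻ x in Ioc p r, (‖g x‖₊ : ℝ≥0∞) ^ q) ^ (1/q) *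
          (ENNReal.ofReal (r - p)) ^ (1 - 1/q)) ^ q := by
        apply ENNReal.rpow_le_rpow _ hq0.le
        rw [← h2, ← h3]; exact h1
    _ = ENNReal.ofReal (r - p) ^ (q - 1) * ∫⁻ x in Ioc p r, (‖g x‖₊ : ℝ≥0∞) ^ q := by
        rw [ENNReal.mul_rpow_of_nonneg _ _ hq0.le, ← ENNReal.rpow_mul, ← ENNReal.rpow_mul,
          one_div_mul_cancel hq0.ne', ENNReal.rpow_one]
        rw [mul_comm]
        congr 1
        field_simp


lemma min_seg {q : ℝ} (hq0 : 0 < q) {F : ℝ → ℂ} {p r : ℝ} (hpr : p ≤ r)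
    (hF : ContinuousOn F (Icc p r)) :
    ∃ s ∈ Icc p r, (‖F s‖₊ : ℝ≥0∞) ^ q * ENNReal.ofReal (r - p) ≤
      ∫⁻ x in Ioc p r, (‖F x‖₊ : ℝ≥0∞) ^ q := by
  obtain ⟨s, hs, hmin⟩ := isCompact_Icc.exists_isMinOn (nonempty_Icc.2 hpr) hF.norm
  refine ⟨s, hs, ?_⟩
  have : (‖F s‖₊ : ℝ≥0∞) ^ q * ENNReal.ofReal (r - p) =
      ∫⁻ _ in Ioc p r, (‖F s‖₊ : ℝ≥0∞) ^ q := by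
    rw [setLIntegral_const, Real.volume_Ioc]
  rw [this]
  refine lintegral_mono_ae ((ae_restrict_iff' measurableSet_Ioc).2 (ae_of_all _ fun x hx => ?_))
  refine ENNReal.rpow_le_rpow ?_ hq0.le
  have h := isMinOn_iff.1 hmin x (Ioc_subset_Icc_self hx)
  exact_mod_cast ENNReal.coe_le_coe.2 (by exact_mod_cast h)

lemma disj_sum {L : ℕ} {S : Fin L → Set ℝ} (hm : ∀ i, MeasurableSet (S i))
    (hd : Pairwise (Function.onFun Disjoint S)) {T : Set ℝ} (hsub : ∀ i, S i ⊆ T)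
    (g : ℝ → ℝ≥0∞) :
    ∑ i : Fin L, ∫⁻ x in S i, g x ≤ ∫⁻ x in T, g x := by
  calc ∑ i : Fin L, ∫⁻ x in S i, g x = ∑' i : Fin L, ∫⁻ x in S i, g x := (tsum_fintype _).symm
    _ = ∫⁻ x in ⋃ i, S i, g x := (lintegral_iUnion hm hd g).symm
    _ ≤ _ := lintegral_mono_set (iUnion_subset hsub)

lemma two_rpow_bound {q : ℝ} (hq : 1 ≤ q) (x y : ℝ≥0∞) :
    (x + y) ^ q ≤ (2:ℝ≥0∞) ^ q * (x ^ q + y ^ q) := by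
  have hq0 : (0:ℝ) ≤ q := le_trans zero_le_one hq
  have h1 : x + y ≤ 2 * max x y := by
    rw [two_mul]; exact add_le_add (le_max_left x y) (le_max_right x y)
  calc (x + y) ^ q ≤ (2 * max x y) ^ q := ENNReal.rpow_le_rpow h1 hq0
    _ = (2:ℝ≥0∞) ^ q * (max x y) ^ q := ENNReal.mul_rpow_of_nonneg _ _ hq0
    _ ≤ (2:ℝ≥0∞) ^ q * (x ^ q + y ^ q) := by
        gcongr
        rcases max_cases x y with ⟨h, _⟩ | ⟨h, _⟩ <;> rw [h]
        · exact le_self_add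
        · exact le_add_self

lemma lint_ne_top {q : ℝ} (hq0 : 0 ≤ q) {c d : ℝ} {g : ℝ → ℂ} (hg : ContinuousOn g (Icc c d)) :
    ∫⁻ x in Icc c d, (‖g x‖₊ : ℝ≥0∞) ^ q ≠ ⊤ := by
  obtain ⟨M, hM⟩ := isCompact_Icc.exists_bound_of_continuousOn hg
  have hle : ∫⁻ x in Icc c d, (‖g x‖₊ : ℝ≥0∞) ^ q ≤
      ∫⁻ _ in Icc c d, (ENNReal.ofReal M) ^ q := by
    refine lintegral_mono_ae ((ae_restrict_iff' measurableSet_Icc).2 (ae_of_all _ fun x hx => ?_))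
    refine ENNReal.rpow_le_rpow ?_ hq0
    rw [← enorm_eq_nnnorm, ← ofReal_norm_eq_enorm]
    exact ENNReal.ofReal_le_ofReal (hM x hx)
  rw [setLIntegral_const] at hle
  exact ne_top_of_le_ne_top
    (ENNReal.mul_ne_top (ENNReal.rpow_ne_top_of_nonneg hq0 ENNReal.ofReal_ne_top)
      (by rw [Real.volume_Icc]; exact ENNReal.ofReal_ne_top)) hle



lemma endpoint_bound (hq : 1 ≤ q)
    (hder : ∀ t ∈ Icc c d, HasDerivWithinAt F (F' t) (Icc c d) t)
    (hcont : ContinuousOn F' (Icc c d)) {p r : ℝ} (hpr : p < r)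
    (hsub : Icc p r ⊆ Icc c d) {w : ℝ} (hw : w = p ∨ w = r) :
    (‖F w‖₊ : ℝ≥0∞) ^ q ≤ (2:ℝ≥0∞) ^ q *
      ((ENNReal.ofReal (r - p))⁻¹ * (∫⁻ x in Ioc p r, (‖F x‖₊ : ℝ≥0∞) ^ q) +
       (ENNReal.ofReal (r - p)) ^ (q - 1) * (∫⁻ x in Ioc p r, (‖F' x‖₊ : ℝ≥0∞) ^ q)) := by
  have hq0 : (0:ℝ) < q := lt_of_lt_of_le one_pos hq
  have hFc : ContinuousOn F (Icc c d) := fun x hx => (hder x hx).continuousWithinAt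
  obtain ⟨s, hs, hmin⟩ := min_seg hq0 hpr.le (hFc.mono hsub)
  set m := ENNReal.ofReal (r - p) with hm
  have hm0 : m ≠ 0 := (ENNReal.ofReal_pos.2 (by linarith)).ne'
  have hmtop : m ≠ ⊤ := ENNReal.ofReal_ne_top
  set X : ℝ≥0∞ := (‖F s‖₊ : ℝ≥0∞) with hX
  set Y : ℝ≥0∞ := ∫⁻ x in Ioc p r, (‖F' x‖₊ : ℝ≥0∞) with hY
  have htri : (‖F w‖₊ : ℝ≥0∞) ≤ X + Y := by
    have h1 : ‖F w‖₊ ≤ ‖F s‖₊ + ‖F w - F s‖₊ := by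
      have he : F w = F s + (F w - F s) := by ring
      calc ‖F w‖₊ = ‖F s + (F w - F s)‖₊ := by rw [← he]
        _ ≤ _ := nnnorm_add_le _ _
    have h2 : (‖F w - F s‖₊ : ℝ≥0∞) ≤ Y := by
      rcases hw with h | h
      · rw [h, show F p - F s = -(F s - F p) by ring, nnnorm_neg]
        calc (‖F s - F p‖₊ : ℝ≥0∞) ≤ ∫⁻ x in Ioc p s, ‖F' x‖₊ :=
              ftc_bound hder hcont hs.1
                (subset_trans (Icc_subset_Icc le_rfl hs.2) hsub)
          _ ≤ Y := lintegral_mono_set (Ioc_subset_Ioc le_rfl hs.2)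
      · rw [h]
        calc (‖F r - F s‖₊ : ℝ≥0∞) ≤ ∫⁻ x in Ioc s r, ‖F' x‖₊ :=
              ftc_bound hder hcont hs.2
                (subset_trans (Icc_subset_Icc hs.1 le_rfl) hsub)
          _ ≤ Y := lintegral_mono_set (Ioc_subset_Ioc hs.1 le_rfl)
    calc (‖F w‖₊ : ℝ≥0∞) ≤ (‖F s‖₊ : ℝ≥0∞) + ‖F w - F s‖₊ := by exact_mod_cast h1
      _ ≤ X + Y := add_le_add_right h2 _
  have hXq : X ^ q ≤ m⁻¹ * ∫⁻ x in Ioc p r, (‖F x‖₊ : ℝ≥0∞) ^ q := by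
    rw [mul_comm, ← div_eq_mul_inv]
    exact (ENNReal.le_div_iff_mul_le (Or.inl hm0) (Or.inl hmtop)).2 hmin
  have hYq : Y ^ q ≤ m ^ (q - 1) * ∫⁻ x in Ioc p r, (‖F' x‖₊ : ℝ≥0∞) ^ q :=
    holder_seg hq hpr.le (hcont.mono hsub)
  calc (‖F w‖₊ : ℝ≥0∞) ^ q ≤ (X + Y) ^ q := ENNReal.rpow_le_rpow htri hq0.le
    _ ≤ (2:ℝ≥0∞) ^ q * (X ^ q + Y ^ q) := two_rpow_bound hq X Y
    _ ≤ _ := mul_le_mul_right (add_le_add hXq hYq) _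

lemma incr_bound_B (hq : 1 ≤ q)
    (hder : ∀ t ∈ Icc c d, HasDerivWithinAt F (F' t) (Icc c d) t)
    (hcont : ContinuousOn F' (Icc c d)) {u v δ : ℝ} (huv : u < v) (hδ : 0 < δ)
    (hδl : δ ≤ v - u) (hsub : Icc u v ⊆ Icc c d) :
    (‖F v - F u‖₊ : ℝ≥0∞) ^ q ≤ (4:ℝ≥0∞) ^ q *
      ((ENNReal.ofReal δ)⁻¹ *
          ((∫⁻ x in Ioc (v - δ) v, (‖F x‖₊ : ℝ≥0∞) ^ q) +
            (∫⁻ x in Ioc u (u + δ), (‖F x‖₊ : ℝ≥0∞) ^ q)) +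
        (ENNReal.ofReal δ) ^ (q - 1) *
          ((∫⁻ x in Ioc (v - δ) v, (‖F' x‖₊ : ℝ≥0∞) ^ q) +
            (∫⁻ x in Ioc u (u + δ), (‖F' x‖₊ : ℝ≥0∞) ^ q))) := by
  have hq0 : (0:ℝ) < q := lt_of_lt_of_le one_pos hq
  have e1 := endpoint_bound hq hder hcont (show v - δ < v by linarith)
    (subset_trans (Icc_subset_Icc (by linarith) le_rfl) hsub) (Or.inr rfl)
  have e2 := endpoint_bound hq hder hcont (show u < u + δ by linarith)
    (subset_trans (Icc_subset_Icc le_rfl (by linarith)) hsub) (Or.inl rfl)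
  rw [sub_sub_cancel] at e1
  rw [add_sub_cancel_left] at e2
  have htri : (‖F v - F u‖₊ : ℝ≥0∞) ≤ (‖F v‖₊ : ℝ≥0∞) + (‖F u‖₊ : ℝ≥0∞) := by
    exact_mod_cast nnnorm_sub_le (F v) (F u)
  calc (‖F v - F u‖₊ : ℝ≥0∞) ^ q
      ≤ ((‖F v‖₊ : ℝ≥0∞) + (‖F u‖₊ : ℝ≥0∞)) ^ q := ENNReal.rpow_le_rpow htri hq0.le
    _ ≤ (2:ℝ≥0∞) ^ q * ((‖F v‖₊ : ℝ≥0∞) ^ q + (‖F u‖₊ : ℝ≥0∞) ^ q) := two_rpow_bound hq _ _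
    _ ≤ (2:ℝ≥0∞) ^ q * ((2:ℝ≥0∞) ^ q *
          ((ENNReal.ofReal δ)⁻¹ * (∫⁻ x in Ioc (v - δ) v, (‖F x‖₊ : ℝ≥0∞) ^ q) +
           (ENNReal.ofReal δ) ^ (q - 1) * (∫⁻ x in Ioc (v - δ) v, (‖F' x‖₊ : ℝ≥0∞) ^ q)) +
        (2:ℝ≥0∞) ^ q *
          ((ENNReal.ofReal δ)⁻¹ * (∫⁻ x in Ioc u (u + δ), (‖F x‖₊ : ℝ≥0∞) ^ q) +
           (ENNReal.ofReal δ) ^ (q - 1) * (∫⁻ x in Ioc u (u + δ), (‖F' x‖₊ : ℝ≥0∞) ^ q))) :=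
        mul_le_mul_right (add_le_add e1 e2) _
    _ = _ := by
        rw [show (4:ℝ≥0∞) = 2 * 2 by norm_num, ENNReal.mul_rpow_of_nonneg _ _ hq0.le]
        ring




lemma core_sum (hq : 1 ≤ q)
    (hder : ∀ t ∈ Icc c d, HasDerivWithinAt F (F' t) (Icc c d) t)
    (hcont : ContinuousOn F' (Icc c d)) {δ : ℝ} (hδ : 0 < δ)
    {L : ℕ} {t : Fin (L + 1) → ℝ} (ht : StrictMono t) (hts : ∀ i, t i ∈ Icc c d) :
    ∑ i : Fin L, (‖F (t i.succ) - F (t i.castSucc)‖₊ : ℝ≥0∞) ^ q ≤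
      (8:ℝ≥0∞) ^ q *
        ((ENNReal.ofReal δ)⁻¹ * (2 * ∫⁻ x in Icc c d, (‖F x‖₊ : ℝ≥0∞) ^ q) +
          (ENNReal.ofReal δ) ^ (q - 1) * (2 * ∫⁻ x in Icc c d, (‖F' x‖₊ : ℝ≥0∞) ^ q)) := by
  have hq0 : (0:ℝ) < q := lt_of_lt_of_le one_pos hq
  set m := ENNReal.ofReal δ with hmdef
  set S1 : Fin L → Set ℝ := fun i =>
    if t i.succ - t i.castSucc ≤ δ then Ioc (t i.castSucc) (t i.succ)
    else Ioc (t i.succ - δ) (t i.succ) with hS1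
  set S2 : Fin L → Set ℝ := fun i =>
    if t i.succ - t i.castSucc ≤ δ then Ioc (t i.castSucc) (t i.succ)
    else Ioc (t i.castSucc) (t i.castSucc + δ) with hS2
  have huv : ∀ i : Fin L, t i.castSucc < t i.succ := fun i => ht (Fin.castSucc_lt_succ (i := i))
  have hsubI : ∀ i : Fin L, Icc (t i.castSucc) (t i.succ) ⊆ Icc c d := fun i =>
    Icc_subset_Icc (hts _).1 (hts _).2
  have hS1P : ∀ i, S1 i ⊆ Ioc (t i.castSucc) (t i.succ) := by
    intro i; rw [hS1]; dsimp only; split_ifs with h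
    · exact subset_rfl
    · exact Ioc_subset_Ioc (by linarith [not_le.1 h]) le_rfl
  have hS2P : ∀ i, S2 i ⊆ Ioc (t i.castSucc) (t i.succ) := by
    intro i; rw [hS2]; dsimp only; split_ifs with h
    · exact subset_rfl
    · exact Ioc_subset_Ioc le_rfl (by linarith [not_le.1 h])
  have hm1 : ∀ i, MeasurableSet (S1 i) := by
    intro i; rw [hS1]; dsimp only; split_ifs <;> exact measurableSet_Ioc
  have hm2 : ∀ i, MeasurableSet (S2 i) := by
    intro i; rw [hS2]; dsimp only; split_ifs <;> exact measurableSet_Ioc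
  have hdisjP : Pairwise (Function.onFun Disjoint (fun i : Fin L => Ioc (t i.castSucc) (t i.succ))) := by
    intro i j hij
    have key : ∀ i j : Fin L, i < j → t i.succ ≤ t j.castSucc := by
      intro i j h
      refine ht.monotone ?_
      rw [Fin.le_def, Fin.val_succ, Fin.coe_castSucc]
      exact h
    rcases lt_or_gt_of_ne hij with h | h
    · exact Set.Ioc_disjoint_Ioc.2 (le_trans (min_le_left _ _)
        (le_trans (key i j h) (le_max_right _ _)))
    · exact Set.Ioc_disjoint_Ioc.2 (le_trans (min_le_right _ _)
        (le_trans (key j i h) (le_max_left _ _)))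
  have hdisj1 : Pairwise (Function.onFun Disjoint S1) :=
    fun i j hij => ((hdisjP hij).mono (hS1P i) (hS1P j))
  have hdisj2 : Pairwise (Function.onFun Disjoint S2) :=
    fun i j hij => ((hdisjP hij).mono (hS2P i) (hS2P j))
  have hsub1 : ∀ i, S1 i ⊆ Icc c d := fun i =>
    subset_trans (hS1P i) (subset_trans Ioc_subset_Icc_self (hsubI i))
  have hsub2 : ∀ i, S2 i ⊆ Icc c d := fun i =>
    subset_trans (hS2P i) (subset_trans Ioc_subset_Icc_self (hsubI i))
  have key : ∀ i : Fin L, (‖F (t i.succ) - F (t i.castSucc)‖₊ : ℝ≥0∞) ^ q ≤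
      (8:ℝ≥0∞) ^ q *
        (m⁻¹ * ((∫⁻ x in S1 i, (‖F x‖₊ : ℝ≥0∞) ^ q) + (∫⁻ x in S2 i, (‖F x‖₊ : ℝ≥0∞) ^ q)) +
         m ^ (q - 1) * ((∫⁻ x in S1 i, (‖F' x‖₊ : ℝ≥0∞) ^ q) +
           (∫⁻ x in S2 i, (‖F' x‖₊ : ℝ≥0∞) ^ q))) := by
    intro i
    have h18 : (1:ℝ≥0∞) ≤ (8:ℝ≥0∞) ^ q := by
      calc (1:ℝ≥0∞) = (8:ℝ≥0∞) ^ (0:ℝ) := by rw [ENNReal.rpow_zero]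
        _ ≤ _ := ENNReal.rpow_le_rpow_of_exponent_le (by norm_num) hq0.le
    rcases le_or_gt (t i.succ - t i.castSucc) δ with hc | hc
    · have hS1i : S1 i = Ioc (t i.castSucc) (t i.succ) := by rw [hS1]; exact if_pos hc
      have step : (‖F (t i.succ) - F (t i.castSucc)‖₊ : ℝ≥0∞) ^ q ≤
          m ^ (q - 1) * ∫⁻ x in S1 i, (‖F' x‖₊ : ℝ≥0∞) ^ q := by
        rw [hS1i]
        calc (‖F (t i.succ) - F (t i.castSucc)‖₊ : ℝ≥0∞) ^ q
            ≤ (∫⁻ x in Ioc (t i.castSucc) (t i.succ), (‖F' x‖₊ : ℝ≥0∞)) ^ q :=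
              ENNReal.rpow_le_rpow (ftc_bound hder hcont (huv i).le (hsubI i)) hq0.le
          _ ≤ ENNReal.ofReal (t i.succ - t i.castSucc) ^ (q - 1) *
                ∫⁻ x in Ioc (t i.castSucc) (t i.succ), (‖F' x‖₊ : ℝ≥0∞) ^ q :=
              holder_seg hq (huv i).le (hcont.mono (hsubI i))
          _ ≤ m ^ (q - 1) * ∫⁻ x in Ioc (t i.castSucc) (t i.succ), (‖F' x‖₊ : ℝ≥0∞) ^ q := by
              exact mul_le_mul_left
                (ENNReal.rpow_le_rpow (ENNReal.ofReal_le_ofReal hc) (by linarith)) _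
      refine le_trans step (le_trans ?_ (le_mul_of_one_le_left' h18))
      calc m ^ (q - 1) * ∫⁻ x in S1 i, (‖F' x‖₊ : ℝ≥0∞) ^ q
          ≤ m ^ (q - 1) * ((∫⁻ x in S1 i, (‖F' x‖₊ : ℝ≥0∞) ^ q) +
              (∫⁻ x in S2 i, (‖F' x‖₊ : ℝ≥0∞) ^ q)) := by gcongr; exact le_self_add
        _ ≤ _ := le_add_self
    · have hS1i : S1 i = Ioc (t i.succ - δ) (t i.succ) := by rw [hS1]; exact if_neg (not_le.2 hc)
      have hS2i : S2 i = Ioc (t i.castSucc) (t i.castSucc + δ) := by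
        rw [hS2]; exact if_neg (not_le.2 hc)
      have step := incr_bound_B hq hder hcont (huv i) hδ hc.le (hsubI i)
      rw [← hS1i, ← hS2i] at step
      exact le_trans step (mul_le_mul_left
        (ENNReal.rpow_le_rpow (by norm_num) hq0.le) _)
  calc ∑ i : Fin L, (‖F (t i.succ) - F (t i.castSucc)‖₊ : ℝ≥0∞) ^ q
      ≤ ∑ i : Fin L, (8:ℝ≥0∞) ^ q *
        (m⁻¹ * ((∫⁻ x in S1 i, (‖F x‖₊ : ℝ≥0∞) ^ q) + (∫⁻ x in S2 i, (‖F x‖₊ : ℝ≥0∞) ^ q)) +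
         m ^ (q - 1) * ((∫⁻ x in S1 i, (‖F' x‖₊ : ℝ≥0∞) ^ q) +
           (∫⁻ x in S2 i, (‖F' x‖₊ : ℝ≥0∞) ^ q))) := Finset.sum_le_sum fun i _ => key i
    _ = (8:ℝ≥0∞) ^ q *
        (m⁻¹ * ((∑ i : Fin L, ∫⁻ x in S1 i, (‖F x‖₊ : ℝ≥0∞) ^ q) +
            (∑ i : Fin L, ∫⁻ x in S2 i, (‖F x‖₊ : ℝ≥0∞) ^ q)) +
         m ^ (q - 1) * ((∑ i : Fin L, ∫⁻ x in S1 i, (‖F' x‖₊ : ℝ≥0∞) ^ q) +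
            (∑ i : Fin L, ∫⁻ x in S2 i, (‖F' x‖₊ : ℝ≥0∞) ^ q))) := by
        simp only [Finset.sum_add_distrib, ← Finset.mul_sum]
    _ ≤ _ := by
        gcongr
        · rw [two_mul]
          exact add_le_add (disj_sum hm1 hdisj1 hsub1 _) (disj_sum hm2 hdisj2 hsub2 _)
        · rw [two_mul]
          exact add_le_add (disj_sum hm1 hdisj1 hsub1 _) (disj_sum hm2 hdisj2 hsub2 _)


end helperLemmas

/-- Sobolev embedding for variation norms: if `F ∈ C¹(I)`, `I = [c,d] ⊆ (0,∞)` and `q ≥ 1`,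
then `‖F‖_{v_q(I)} ≤ C_q ‖F‖_{L^q(I)}^{1/q'} ‖F'‖_{L^q(I)}^{1/q}`, `1/q + 1/q' = 1`. -/
theorem variation_sobolev_embedding (q : ℝ) (hq : 1 ≤ q) :
    ∃ C : ℝ≥0∞, C ≠ ⊤ ∧ ∀ (c d : ℝ) (F F' : ℝ → ℂ), 0 < c → c ≤ d →
      (∀ t ∈ Set.Icc c d, HasDerivWithinAt F (F' t) (Set.Icc c d) t) →
      ContinuousOn F' (Set.Icc c d) →
      qVariationOn q F (Set.Icc c d) ≤
        C * (eLpNorm F (ENNReal.ofReal q) (volume.restrict (Set.Icc c d))) ^ (1 - 1 / q)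
          * (eLpNorm F' (ENNReal.ofReal q) (volume.restrict (Set.Icc c d))) ^ (1 / q) := by
  have hq0 : (0:ℝ) < q := lt_of_lt_of_le one_pos hq
  have hq0' : (0:ℝ) < 1 / q := by positivity
  refine ⟨32, by norm_num, ?_⟩
  intro c d F F' hc hcd hder hcont
  rw [qVariationOn]
  refine iSup_le fun L => iSup_le fun t => iSup_le fun ht => iSup_le fun hts => ?_
  have hFc : ContinuousOn F (Set.Icc c d) := fun x hx => (hder x hx).continuousWithinAt
  set a := ∫⁻ x in Set.Icc c d, (‖F x‖₊ : ℝ≥0∞) ^ q with ha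
  set b := ∫⁻ x in Set.Icc c d, (‖F' x‖₊ : ℝ≥0∞) ^ q with hb
  have hA : eLpNorm F (ENNReal.ofReal q) (volume.restrict (Set.Icc c d)) = a ^ (1/q) := by
    rw [eLpNorm_eq_lintegral_rpow_enorm_toReal (ENNReal.ofReal_pos.2 hq0).ne' ENNReal.ofReal_ne_top,
      ENNReal.toReal_ofReal hq0.le]
    rfl
  have hB : eLpNorm F' (ENNReal.ofReal q) (volume.restrict (Set.Icc c d)) = b ^ (1/q) := by
    rw [eLpNorm_eq_lintegral_rpow_enorm_toReal (ENNReal.ofReal_pos.2 hq0).ne' ENNReal.ofReal_ne_top,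
      ENNReal.toReal_ofReal hq0.le]
    rfl
  rw [hA, hB]
  rcases eq_or_lt_of_le hcd with rfl | hcd'
  · -- degenerate interval
    cases L with
    | zero =>
      simp only [Finset.univ_eq_empty, Finset.sum_empty]
      rw [ENNReal.zero_rpow_of_pos hq0']
      exact zero_le
    | succ n =>
      exfalso
      have h01 : (0 : Fin (n + 2)) < 1 := by rw [Fin.lt_def]; norm_num
      have hlt := ht h01
      have h0 := hts 0
      have h1 := hts 1
      rw [Set.Icc_self, Set.mem_singleton_iff] at h0 h1
      rw [h0, h1] at hlt
      exact lt_irrefl _ hlt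
  · have ha_top : a ≠ ⊤ := lint_ne_top hq0.le hFc
    have hb_top : b ≠ ⊤ := lint_ne_top hq0.le hcont
    rcases eq_or_ne b 0 with hb0 | hb0
    · -- F' has zero L^q norm : all increments vanish
      have hz : ∀ i : Fin L, (‖F (t i.succ) - F (t i.castSucc)‖₊ : ℝ≥0∞) ^ q = 0 := by
        intro i
        have huv : t i.castSucc < t i.succ := ht (Fin.castSucc_lt_succ (i := i))
        have hsubI : Set.Icc (t i.castSucc) (t i.succ) ⊆ Set.Icc c d :=
          Set.Icc_subset_Icc (hts _).1 (hts _).2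
        have h3 : ∫⁻ x in Set.Ioc (t i.castSucc) (t i.succ), (‖F' x‖₊ : ℝ≥0∞) ^ q = 0 := by
          refine le_antisymm (le_trans (lintegral_mono_set
            (subset_trans Set.Ioc_subset_Icc_self hsubI)) ?_) (zero_le)
          rw [← hb, hb0]
        have h2 := holder_seg hq huv.le (hcont.mono hsubI)
        rw [h3, mul_zero] at h2
        have h4 : ∫⁻ x in Set.Ioc (t i.castSucc) (t i.succ), (‖F' x‖₊ : ℝ≥0∞) = 0 := by
          have := le_antisymm h2 (zero_le)
          rcases ENNReal.rpow_eq_zero_iff.1 this with ⟨h, _⟩ | ⟨_, h⟩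
          · exact h
          · linarith
        have h1 := ftc_bound hder hcont huv.le hsubI
        rw [h4, le_zero_iff] at h1
        rw [h1, ENNReal.zero_rpow_of_pos hq0]
      rw [Finset.sum_eq_zero fun i _ => hz i, ENNReal.zero_rpow_of_pos hq0']
      exact zero_le
    rcases eq_or_ne a 0 with ha0 | ha0
    · -- F has zero L^q norm
      rcases eq_or_lt_of_le hq with rfl | hq1
      · -- q = 1
        have hcore := core_sum le_rfl hder hcont one_pos ht hts
        rw [← ha, ← hb, ha0] at hcore
        simp only [ENNReal.ofReal_one, inv_one, sub_self, ENNReal.rpow_zero, one_mul,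
          ENNReal.rpow_one, mul_zero, zero_add] at hcore
        norm_num [ENNReal.rpow_one]
        refine le_trans hcore ?_
        calc (8:ℝ≥0∞) * (2 * b) = 16 * b := by ring
          _ ≤ 32 * b := mul_le_mul_left (by norm_num) b
      · -- q > 1 : let δ → 0
        have key : ∀ δ : ℝ, 0 < δ →
            ∑ i : Fin L, (‖F (t i.succ) - F (t i.castSucc)‖₊ : ℝ≥0∞) ^ q ≤
              (8:ℝ≥0∞) ^ q * ((ENNReal.ofReal δ) ^ (q - 1) * (2 * b)) := by
          intro δ hδ
          have hcore := core_sum hq hder hcont hδ ht hts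
          rw [← ha, ← hb, ha0] at hcore
          simpa using hcore
        have hKtop : ((8:ℝ≥0∞) ^ q) ≠ ⊤ :=
          ENNReal.rpow_ne_top_of_nonneg hq0.le (by norm_num)
        have h2b : (2 * b : ℝ≥0∞) ≠ ⊤ := ENNReal.mul_ne_top (by norm_num) hb_top
        have t1 : Filter.Tendsto (fun n : ℕ => ENNReal.ofReal (1/(n+1:ℝ)))
            Filter.atTop (nhds 0) := by
          rw [← ENNReal.ofReal_zero]
          exact (ENNReal.continuous_ofReal.tendsto 0).comp
            tendsto_one_div_add_atTop_nhds_zero_nat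
        have t2 : Filter.Tendsto (fun n : ℕ => (ENNReal.ofReal (1/(n+1:ℝ))) ^ (q-1))
            Filter.atTop (nhds 0) := by
          have h := (ENNReal.continuous_rpow_const (y := q - 1)).tendsto 0
          have := h.comp t1
          simpa [Function.comp_def, ENNReal.zero_rpow_of_pos (sub_pos.2 hq1)] using this
        have t3 : Filter.Tendsto
            (fun n : ℕ => (8:ℝ≥0∞) ^ q * ((ENNReal.ofReal (1/(n+1:ℝ))) ^ (q-1) * (2 * b)))
            Filter.atTop (nhds 0) := by
          have h1 := ENNReal.Tendsto.mul_const t2 (Or.inr h2b)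
          rw [zero_mul] at h1
          have h2 := ENNReal.Tendsto.const_mul h1 (Or.inr hKtop)
          rwa [mul_zero] at h2
        have hsum0 : ∑ i : Fin L, (‖F (t i.succ) - F (t i.castSucc)‖₊ : ℝ≥0∞) ^ q = 0 := by
          refine le_antisymm (ge_of_tendsto' t3 fun n => key _ (by positivity)) (zero_le)
        rw [hsum0, ENNReal.zero_rpow_of_pos hq0']
        exact zero_le
    · -- main case
      have hab_top : a / b ≠ ⊤ := by
        simp only [ne_eq, ENNReal.div_eq_top]
        push_neg
        exact ⟨fun _ => hb0, fun h => absurd h ha_top⟩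
      have hab0 : a / b ≠ 0 := by
        simp only [ne_eq, ENNReal.div_eq_zero_iff]
        push_neg
        exact ⟨ha0, hb_top⟩
      have rpow_ne_zero : ∀ (x : ℝ≥0∞) (e : ℝ), x ≠ 0 → x ≠ ⊤ → x ^ e ≠ 0 := by
        intro x e h0 ht' h
        rcases ENNReal.rpow_eq_zero_iff.1 h with ⟨h1, _⟩ | ⟨h1, _⟩
        exacts [h0 h1, ht' h1]
      set D : ℝ≥0∞ := (a / b) ^ (1/q) with hD
      have hD0 : D ≠ 0 := rpow_ne_zero _ _ hab0 hab_top
      have hDtop : D ≠ ⊤ := ENNReal.rpow_ne_top_of_nonneg hq0'.le hab_top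
      set δ : ℝ := D.toReal with hδdef
      have hδ : 0 < δ := ENNReal.toReal_pos hD0 hDtop
      have hDof : ENNReal.ofReal δ = D := ENNReal.ofReal_toReal hDtop
      have hcore := core_sum hq hder hcont hδ ht hts
      rw [hDof, ← ha, ← hb] at hcore
      -- rpow facts
      have hxq0 : a ^ (1/q:ℝ) ≠ 0 := rpow_ne_zero _ _ ha0 ha_top
      have hxqt : a ^ (1/q:ℝ) ≠ ⊤ := ENNReal.rpow_ne_top_of_nonneg hq0'.le ha_top
      have hyq0 : b ^ (1/q:ℝ) ≠ 0 := rpow_ne_zero _ _ hb0 hb_top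
      have hyqt : b ^ (1/q:ℝ) ≠ ⊤ := ENNReal.rpow_ne_top_of_nonneg hq0'.le hb_top
      have he0 : (0:ℝ) ≤ 1 - 1/q := by
        rw [sub_nonneg]
        rw [div_le_one hq0]
        exact hq
      have hxe0 : a ^ (1 - 1/q:ℝ) ≠ 0 := rpow_ne_zero _ _ ha0 ha_top
      have hye0 : b ^ (1 - 1/q:ℝ) ≠ 0 := rpow_ne_zero _ _ hb0 hb_top
      have hyet : b ^ (1 - 1/q:ℝ) ≠ ⊤ := ENNReal.rpow_ne_top_of_nonneg he0 hb_top
      have hsplit_a : a ^ (1 - 1/q:ℝ) * a ^ (1/q:ℝ) = a := by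
        rw [← ENNReal.rpow_add _ _ ha0 ha_top]
        norm_num
      have hsplit_b : b ^ (1/q:ℝ) * b ^ (1 - 1/q:ℝ) = b := by
        rw [← ENNReal.rpow_add _ _ hb0 hb_top]
        norm_num
      have hfact_a : a * (a ^ (1/q:ℝ))⁻¹ = a ^ (1 - 1/q:ℝ) := by
        calc a * (a ^ (1/q:ℝ))⁻¹
            = a ^ (1 - 1/q:ℝ) * (a ^ (1/q:ℝ) * (a ^ (1/q:ℝ))⁻¹) := by
              rw [← mul_assoc, hsplit_a]
          _ = a ^ (1 - 1/q:ℝ) := by rw [ENNReal.mul_inv_cancel hxq0 hxqt, mul_one]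
      have hfact_b : b * (b ^ (1 - 1/q:ℝ))⁻¹ = b ^ (1/q:ℝ) := by
        calc b * (b ^ (1 - 1/q:ℝ))⁻¹
            = b ^ (1/q:ℝ) * (b ^ (1 - 1/q:ℝ) * (b ^ (1 - 1/q:ℝ))⁻¹) := by
              rw [← mul_assoc, hsplit_b]
          _ = b ^ (1/q:ℝ) := by rw [ENNReal.mul_inv_cancel hye0 hyet, mul_one]
      have hDdiv : D = a ^ (1/q:ℝ) / b ^ (1/q:ℝ) :=
        ENNReal.div_rpow_of_nonneg a b hq0'.le
      have hD1 : D⁻¹ * a = a ^ (1 - 1/q:ℝ) * b ^ (1/q:ℝ) := by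
        rw [hDdiv, ENNReal.inv_div (Or.inl hyqt) (Or.inl hyq0), div_eq_mul_inv,
          mul_assoc, mul_comm ((a ^ (1/q:ℝ))⁻¹) a, hfact_a, mul_comm]
      have hD2 : D ^ (q - 1:ℝ) * b = a ^ (1 - 1/q:ℝ) * b ^ (1/q:ℝ) := by
        have hDe : D ^ (q - 1:ℝ) = a ^ (1 - 1/q:ℝ) / b ^ (1 - 1/q:ℝ) := by
          rw [hD, ← ENNReal.rpow_mul]
          have he : (1/q) * (q - 1) = 1 - 1/q := by field_simp
          rw [he, ENNReal.div_rpow_of_nonneg a b he0]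
        rw [hDe, div_eq_mul_inv, mul_assoc, mul_comm ((b ^ (1 - 1/q:ℝ))⁻¹) b, hfact_b]
      have hsum : ∑ i : Fin L, (‖F (t i.succ) - F (t i.castSucc)‖₊ : ℝ≥0∞) ^ q ≤
          (32:ℝ≥0∞) ^ q * (a ^ (1 - 1/q:ℝ) * b ^ (1/q:ℝ)) := by
        refine le_trans hcore ?_
        have harr : D⁻¹ * (2 * a) + D ^ (q-1:ℝ) * (2 * b) =
            2 * (D⁻¹ * a) + 2 * (D ^ (q-1:ℝ) * b) := by ring
        rw [harr, hD1, hD2]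
        have h4 : (2:ℝ≥0∞) * (a ^ (1 - 1/q:ℝ) * b ^ (1/q:ℝ)) +
            2 * (a ^ (1 - 1/q:ℝ) * b ^ (1/q:ℝ)) =
            4 * (a ^ (1 - 1/q:ℝ) * b ^ (1/q:ℝ)) := by ring
        rw [h4, ← mul_assoc]
        refine mul_le_mul_left ?_ _
        calc (8:ℝ≥0∞) ^ q * 4 ≤ (8:ℝ≥0∞) ^ q * (4:ℝ≥0∞) ^ q := by
              refine mul_le_mul_right ?_ _
              calc (4:ℝ≥0∞) = (4:ℝ≥0∞) ^ (1:ℝ) := (ENNReal.rpow_one 4).symm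
                _ ≤ (4:ℝ≥0∞) ^ q := ENNReal.rpow_le_rpow_of_exponent_le (by norm_num) hq
          _ = (32:ℝ≥0∞) ^ q := by
              rw [← ENNReal.mul_rpow_of_nonneg _ _ hq0.le]
              norm_num
      calc (∑ i : Fin L, (‖F (t i.succ) - F (t i.castSucc)‖₊ : ℝ≥0∞) ^ q) ^ (1/q)
          ≤ ((32:ℝ≥0∞) ^ q * (a ^ (1 - 1/q:ℝ) * b ^ (1/q:ℝ))) ^ (1/q) :=
            ENNReal.rpow_le_rpow hsum hq0'.le
        _ = 32 * (a ^ (1/q:ℝ)) ^ (1 - 1/q:ℝ) * (b ^ (1/q:ℝ)) ^ (1/q:ℝ) := by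
            rw [ENNReal.mul_rpow_of_nonneg _ _ hq0'.le, ENNReal.mul_rpow_of_nonneg _ _ hq0'.le,
              ← ENNReal.rpow_mul, mul_one_div_cancel hq0.ne', ENNReal.rpow_one,
              ← ENNReal.rpow_mul, ← ENNReal.rpow_mul, ← ENNReal.rpow_mul,
              mul_comm ((1:ℝ) - 1/q) (1/q), ← mul_assoc]
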